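/- Let E be an ordered field (more generally a densely ordered abelian group) and p a convex, non-realized, unary partial type over E. Then the breadth Br(p) is a convex subgroup: it is convex and closed under differences, i.e. if y₀ and y₁ both realize Br(p) then so does y₁ − y₀. -/

import Mathlib

/-- The realization set of the breadth `Br(p)` of a convex unary partial type `p`,
where `P` is the realization set of `p` in an ordered extension `U` of `E`:
`y` realizes `Br(p)` iff `|y| < b - a` for all `a, b ∈ E` with `p ⊢ a < x < b`
(pairs with an infinite endpoint impose no condition). -/
def breadth {U : Type*} [Field U] [LinearOrder U] [IsStrictOrderedRing U] (E : Subfield U) (P : Set U) : Set U :=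
  {y : U | ∀ a ∈ E, ∀ b ∈ E, (∀ t ∈ P, a < t ∧ t < b) → |y| < b - a}

/-- Let `E` be an ordered field (a densely ordered abelian group),
`p` a convex non-realized unary partial type over `E`, with realization set `P`
(nonempty and order-convex, disjoint from `E`) in an extension `U`.  Then the breadth
`Br(p)` is a convex subgroup: its realization set is order-convex and closed under
differences. -/
theorem stmt4 {U : Type*} [Field U] [LinearOrder U] [IsStrictOrderedRing U] (E : Subfield U) (P : Set U)
    (hne : P.Nonempty)
    (hconv : ∀ a b c : U, a ∈ P → c ∈ P → a ≤ b → b ≤ c → b ∈ P)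
    (hnr : ∀ e ∈ E, e ∉ P) :
    (∀ y₀ y₁ y₂ : U, y₀ ∈ breadth E P → y₂ ∈ breadth E P → y₀ ≤ y₁ → y₁ ≤ y₂ →
      y₁ ∈ breadth E P) ∧
    (∀ y₀ y₁ : U, y₀ ∈ breadth E P → y₁ ∈ breadth E P → y₁ - y₀ ∈ breadth E P) := by
  constructor
  · intro y₀ y₁ y₂ h0 h2 h01 h12 a ha b hb hab
    have H0 := h0 a ha b hb hab
    have H2 := h2 a ha b hb hab
    have h0' := abs_nonneg y₀
    have h2' := abs_nonneg y₂
    rcases le_or_gt 0 y₁ with h | h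
    · have : |y₁| = y₁ := abs_of_nonneg h
      have : y₂ ≤ |y₂| := le_abs_self y₂
      rw [abs_of_nonneg h]
      have : y₂ ≤ |y₂| := le_abs_self y₂
      linarith
    · rw [abs_of_neg h]
      have : -y₀ ≤ |y₀| := neg_le_abs y₀
      linarith
  · intro y₀ y₁ h0 h1 a ha b hb hab
    obtain ⟨t, ht⟩ := hne
    obtain ⟨hat, htb⟩ := hab t ht
    set m : U := (a + b) / 2 with hm
    have hmE : m ∈ E := by
      exact E.div_mem (E.add_mem ha hb) (by
        have : (2 : U) = (1 : U) + 1 := by norm_num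
        rw [this]; exact E.add_mem E.one_mem E.one_mem)
    have hmP : m ∉ P := hnr m hmE
    have htri : |y₁ - y₀| ≤ |y₁| + |y₀| := by
      simpa [sub_eq_add_neg, abs_neg] using abs_add_le y₁ (-y₀)
    rcases lt_or_gt_of_ne (fun h : t = m => hmP (h ▸ ht)) with hlt | hgt
    · -- all of P is below m
      have hub : ∀ s ∈ P, a < s ∧ s < m := by
        intro s hs
        refine ⟨(hab s hs).1, ?_⟩
        by_contra hms
        push_neg at hms
        exact hmP (hconv t m s ht hs hlt.le hms)
      have H0 := h0 a ha m hmE hub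
      have H1 := h1 a ha m hmE hub
      have : m - a = (b - a) / 2 := by rw [hm]; ring
      linarith
    · -- all of P is above m
      have hub : ∀ s ∈ P, m < s ∧ s < b := by
        intro s hs
        refine ⟨?_, (hab s hs).2⟩
        by_contra hms
        push_neg at hms
        exact hmP (hconv s m t hs ht hms hgt.le)
      have H0 := h0 m hmE b hb hub
      have H1 := h1 m hmE b hb hub
      have : b - m = (b - a) / 2 := by rw [hm]; ring
      linarith
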